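/- arXiv:1908.06485 — 4 statements merged into one kernel-verified Lean document; each statement's English description precedes it below -/
import Mathlib

section
/- Let ε > 0 and let (u, m) be a classical solution of the discounted MFG system. Then m(x) > 0 for every x ∈ T^d, and ∫_{T^d} m dx = 1. -/
open MeasureTheory Set

noncomputable def pd (d : ℕ) (i : Fin d) (f : (Fin d → ℝ) → ℝ) : (Fin d → ℝ) → ℝ :=
  fun x => fderiv ℝ f x (Pi.single i 1)

noncomputable def gradSq (d : ℕ) (u : (Fin d → ℝ) → ℝ) (x : Fin d → ℝ) : ℝ :=
  ∑ i, pd d i u x ^ 2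

noncomputable def divUp (d : ℕ) (m u : (Fin d → ℝ) → ℝ) (x : Fin d → ℝ) : ℝ :=
  ∑ i, pd d i (fun y => m y * pd d i u y) x

/-- `f` is `ℤ^d`-periodic, i.e. a function on the flat torus `T^d`. -/
def ZPer (d : ℕ) (f : (Fin d → ℝ) → ℝ) : Prop :=
  ∀ (x : Fin d → ℝ) (k : Fin d → ℤ), f (x + fun i => (k i : ℝ)) = f x

/-- `f` has finite `α`-Hölder seminorm. -/
def HolderSemi (α : ℝ) {E : Type*} [PseudoMetricSpace E] (f : E → ℝ) : Prop :=
  ∃ C : ℝ, 0 ≤ C ∧ ∀ x y, |f x - f y| ≤ C * dist x y ^ α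

/-- `f` is of class `C^{1,α}`. -/
def C1Hold (d : ℕ) (α : ℝ) (f : (Fin d → ℝ) → ℝ) : Prop :=
  ContDiff ℝ 1 f ∧ ∀ i, HolderSemi α (pd d i f)

/-- `f` is of class `C^{2,α}`. -/
def C2Hold (d : ℕ) (α : ℝ) (f : (Fin d → ℝ) → ℝ) : Prop :=
  ContDiff ℝ 2 f ∧ ∀ i j, HolderSemi α (pd d i (pd d j f))

/-- `f` is locally `α`-Hölder on `s`. -/
def LocHolderOn (α : ℝ) (f : ℝ → ℝ) (s : Set ℝ) : Prop :=
  ∀ K : Set ℝ, IsCompact K → K ⊆ s →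
    ∃ C : ℝ, 0 ≤ C ∧ ∀ x ∈ K, ∀ y ∈ K, |f x - f y| ≤ C * dist x y ^ α

/-- Standing hypotheses on `g`: strictly increasing and continuous on `[0,∞)`,
of class `C^{1,α}` on `(0,∞)`. -/
def Ghyp (α : ℝ) (g : ℝ → ℝ) : Prop :=
  StrictMonoOn g (Ici 0) ∧ ContinuousOn g (Ici 0) ∧
    DifferentiableOn ℝ g (Ioi 0) ∧ LocHolderOn α (deriv g) (Ioi 0)

/-- Standing hypotheses on `V`: a `C^{1,α}` function on the torus. -/
def Vhyp (d : ℕ) (α : ℝ) (V : (Fin d → ℝ) → ℝ) : Prop :=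
  ZPer d V ∧ C1Hold d α V

/-- The oscillation of `V` over the torus. -/
noncomputable def oscV (d : ℕ) (V : (Fin d → ℝ) → ℝ) : ℝ :=
  sSup (V '' Icc (0 : Fin d → ℝ) 1) - sInf (V '' Icc (0 : Fin d → ℝ) 1)

/-- Assumption (A1): `g⁻¹(g(1) − osc V) > 0`, i.e. `g(1) − osc V` is attained by `g` on `(0,∞)`. -/
def A1 (d : ℕ) (g : ℝ → ℝ) (V : (Fin d → ℝ) → ℝ) : Prop :=
  g 1 - oscV d V ∈ g '' Ioi (0 : ℝ)

/-- Assumption (A2). -/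
def A2 (g : ℝ → ℝ) : Prop :=
  ∃ C₁ C₂ β : ℝ, 0 < C₁ ∧ 0 < C₂ ∧
    (∀ z : ℝ, 0 < z → C₁ * z ^ β ≤ deriv g z) ∧
    (∀ z : ℝ, 0 ≤ z → g z ≤ C₂ + z * g z)

/-- A classical solution `(u, m)` of the discounted MFG system
`ε u + |Du|²/2 + V = g(m)`, `ε m − div(m Du) = ε` on `T^d`. -/
structure DiscSol (d : ℕ) (α : ℝ) (g : ℝ → ℝ) (V : (Fin d → ℝ) → ℝ) (ε : ℝ)
    (u m : (Fin d → ℝ) → ℝ) : Prop where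
  per_u : ZPer d u
  per_m : ZPer d m
  reg_u : C2Hold d α u
  reg_m : C1Hold d α m
  m_nonneg : ∀ x, 0 ≤ m x
  hj : ∀ x, ε * u x + (1 / 2) * gradSq d u x + V x = g (m x)
  fp : ∀ x, ε * m x - divUp d m u x = ε

/-- A classical solution `(u, m, H̄)` of the ergodic MFG system
`|Du|²/2 + V = g(m) + H̄`, `−div(m Du) = 0`, `m ≥ 0`, `∫ m = 1` on `T^d`. -/
structure ErgSol (d : ℕ) (α : ℝ) (g : ℝ → ℝ) (V : (Fin d → ℝ) → ℝ)
    (u m : (Fin d → ℝ) → ℝ) (H : ℝ) : Prop where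
  per_u : ZPer d u
  per_m : ZPer d m
  reg_u : C2Hold d α u
  reg_m : C1Hold d α m
  m_nonneg : ∀ x, 0 ≤ m x
  m_mass : (∫ x in Icc (0 : Fin d → ℝ) 1, m x) = 1
  hj : ∀ x, (1 / 2) * gradSq d u x + V x = g (m x) + H
  fp : ∀ x, divUp d m u x = 0

section auxx

variable {d : ℕ}

lemma zper_fderiv {f : (Fin d → ℝ) → ℝ} (hf : ZPer d f) (hdf : Differentiable ℝ f)
    (x : Fin d → ℝ) (k : Fin d → ℤ) :
    fderiv ℝ f (x + fun i => (k i : ℝ)) = fderiv ℝ f x := by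
  set c : Fin d → ℝ := fun i => (k i : ℝ) with hc
  have h1 : HasFDerivAt (fun y => f (y + c))
      ((fderiv ℝ f (x + c)).comp (ContinuousLinearMap.id ℝ (Fin d → ℝ))) x :=
    (hdf (x + c)).hasFDerivAt.comp x ((hasFDerivAt_id x).add_const c)
  have h2 : (fun y => f (y + c)) = f := funext fun y => hf y k
  rw [h2, ContinuousLinearMap.comp_id] at h1
  exact h1.fderiv.symm

lemma contDiff_pd {u : (Fin d → ℝ) → ℝ} (hu : ContDiff ℝ 2 u) (i : Fin d) :
    ContDiff ℝ 1 (pd d i u) := by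
  have h : ContDiff ℝ 1 (fderiv ℝ u) := hu.fderiv_right (by norm_num)
  exact h.clm_apply contDiff_const

lemma zper_pd {u : (Fin d → ℝ) → ℝ} (hu : ZPer d u) (hdu : Differentiable ℝ u) (i : Fin d) :
    ZPer d (pd d i u) := by
  intro x k
  simp only [pd, zper_fderiv hu hdu x k]

lemma divUp_cont {u m : (Fin d → ℝ) → ℝ} (hu : ContDiff ℝ 2 u) (hm : ContDiff ℝ 1 m) :
    Continuous (divUp d m u) := by
  apply continuous_finset_sum
  intro i _
  have hfi : ContDiff ℝ 1 fun y => m y * pd d i u y := hm.mul (contDiff_pd hu i)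
  have h : Continuous (fderiv ℝ fun y => m y * pd d i u y) :=
    hfi.continuous_fderiv one_ne_zero
  exact h.clm_apply continuous_const

lemma integral_divUp_zero {n : ℕ} {u m : (Fin (n + 1) → ℝ) → ℝ}
    (hu : ContDiff ℝ 2 u) (hm : ContDiff ℝ 1 m) (hpu : ZPer (n + 1) u)
    (hpm : ZPer (n + 1) m) :
    (∫ x in Icc (0 : Fin (n + 1) → ℝ) 1, divUp (n + 1) m u x) = 0 := by
  set f : Fin (n + 1) → (Fin (n + 1) → ℝ) → ℝ := fun i y => m y * pd (n + 1) i u y with hf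
  have hfi : ∀ i, ContDiff ℝ 1 (f i) := fun i => hm.mul (contDiff_pd hu i)
  have key := MeasureTheory.integral_divergence_of_hasFDerivAt_off_countable'
    (a := (0 : Fin (n + 1) → ℝ)) (b := 1) zero_le_one f
    (fun i x => fderiv ℝ (f i) x) ∅ Set.countable_empty
    (fun i => (hfi i).continuous.continuousOn)
    (fun x _ i => ((hfi i).differentiable one_ne_zero x).hasFDerivAt)
    ((divUp_cont hu hm).integrableOn_Icc)
  have hdiv : (∫ x in Icc (0 : Fin (n + 1) → ℝ) 1, divUp (n + 1) m u x) =
      ∫ x in Icc (0 : Fin (n + 1) → ℝ) 1, ∑ i, fderiv ℝ (f i) x (Pi.single i 1) := rfl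
  rw [hdiv, key]
  apply Finset.sum_eq_zero
  intro i _
  have hface : ∀ x : Fin n → ℝ,
      f i (i.insertNth ((1 : Fin (n + 1) → ℝ) i) x) =
        f i (i.insertNth ((0 : Fin (n + 1) → ℝ) i) x) := by
    intro x
    have hins : i.insertNth ((1 : Fin (n + 1) → ℝ) i) x =
        i.insertNth ((0 : Fin (n + 1) → ℝ) i) x +
          fun j => (((Pi.single i 1 : Fin (n + 1) → ℤ) j : ℝ)) := by
      funext j
      rcases eq_or_ne j i with rfl | hj
      · simp
      · obtain ⟨j', hj'⟩ := Fin.exists_succAbove_eq hj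
        rw [← hj']
        simp [Fin.insertNth_apply_succAbove, Pi.single_apply, Fin.succAbove_ne i j']
    rw [hins]
    show m _ * pd (n + 1) i u _ = _
    rw [hpm _ (Pi.single i 1), zper_pd hpu (hu.differentiable (by norm_num)) i _ (Pi.single i 1)]
  rw [setIntegral_congr_fun measurableSet_Icc (fun x _ => hface x), sub_self]

end auxx

theorem stmt0 (d : ℕ) (α : ℝ) (hα0 : 0 < α) (hα1 : α < 1)
    (g : ℝ → ℝ) (V : (Fin d → ℝ) → ℝ) (hg : Ghyp α g) (hV : Vhyp d α V)
    (ε : ℝ) (hε : 0 < ε) (u m : (Fin d → ℝ) → ℝ)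
    (hsol : DiscSol d α g V ε u m) :
    (∀ x, 0 < m x) ∧ (∫ x in Icc (0 : Fin d → ℝ) 1, m x) = 1 := by
  obtain ⟨hm1, -⟩ := hsol.reg_m
  obtain ⟨hu2, -⟩ := hsol.reg_u
  have hpos : ∀ x, 0 < m x := by
    intro x
    rcases (hsol.m_nonneg x).lt_or_eq with h | h
    · exact h
    · exfalso
      have hmin : IsLocalMin m x :=
        Filter.Eventually.of_forall fun y => h ▸ hsol.m_nonneg y
      have hdm : fderiv ℝ m x = 0 := hmin.fderiv_eq_zero
      have hdiv0 : divUp d m u x = 0 := by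
        apply Finset.sum_eq_zero
        intro i _
        have hmd : DifferentiableAt ℝ m x := (hm1.differentiable one_ne_zero) x
        have hwd : DifferentiableAt ℝ (pd d i u) x :=
          ((contDiff_pd hu2 i).differentiable one_ne_zero) x
        show (fderiv ℝ (fun y => m y * pd d i u y) x) (Pi.single i 1) = 0
        rw [fderiv_fun_mul hmd hwd]
        simp [← h, hdm]
      have hfx := hsol.fp x
      rw [hdiv0, ← h] at hfx
      simp at hfx
      exact hε.ne' hfx.symm
  refine ⟨hpos, ?_⟩
  have hdivC : Continuous (divUp d m u) := divUp_cont hu2 hm1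
  have hmC : Continuous m := hm1.continuous
  have hvol : (volume (Icc (0 : Fin d → ℝ) 1)).toReal = 1 := by
    rw [Real.volume_Icc_pi_toReal zero_le_one]
    simp
  have hzero : (∫ x in Icc (0 : Fin d → ℝ) 1, divUp d m u x) = 0 := by
    cases d with
    | zero => simp [divUp]
    | succ n => exact integral_divUp_zero hu2 hm1 hsol.per_u hsol.per_m
  have heq : ∀ x : Fin d → ℝ, ε * m x = ε + divUp d m u x := fun x => by
    have := hsol.fp x; linarith
  have h1 : (∫ x in Icc (0 : Fin d → ℝ) 1, ε * m x)
      = ∫ x in Icc (0 : Fin d → ℝ) 1, (ε + divUp d m u x) :=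
    setIntegral_congr_fun measurableSet_Icc fun x _ => heq x
  rw [MeasureTheory.integral_const_mul] at h1
  rw [integral_add
      (integrableOn_const (μ := volume) (C := ε) isCompact_Icc.measure_lt_top.ne)
      (hdivC.integrableOn_Icc)] at h1
  rw [hzero, setIntegral_const, measureReal_def, hvol] at h1
  have h2 : ε * (∫ x in Icc (0 : Fin d → ℝ) 1, m x) = ε * 1 := by
    rw [h1]; simp
  exact mul_left_cancel₀ hε.ne' h2
end

section
/- Suppose Assumptions (A1) and (A2) hold. Then there exists a constant C > 0, depending only on g, V and d (not on ε or on the solution), such that for every ε > 0 and every classical solution (u, m) of the discounted MFG system one has ∫_{T^d} m^{β+2} dx ≤ C, where β is the exponent from Assumption (A2). -/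
open MeasureTheory Set

section Aux

variable {d : ℕ}

lemma contPd {f : (Fin d → ℝ) → ℝ} (hf : ContDiff ℝ 1 f) (i : Fin d) :
    Continuous (pd d i f) :=
  (hf.continuous_fderiv one_ne_zero).clm_apply continuous_const

lemma contDiffPd {f : (Fin d → ℝ) → ℝ} (hf : ContDiff ℝ 2 f) (i : Fin d) :
    ContDiff ℝ 1 (pd d i f) :=
  (hf.fderiv_right (by norm_num)).clm_apply contDiff_const

lemma fderiv_translate {f : (Fin d → ℝ) → ℝ} {x c : Fin d → ℝ}
    (hf : DifferentiableAt ℝ f (x + c)) :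
    fderiv ℝ (fun y => f (y + c)) x = fderiv ℝ f (x + c) := by
  have h1 : HasFDerivAt (fun y : Fin d → ℝ => y + c)
      (ContinuousLinearMap.id ℝ (Fin d → ℝ)) x := (hasFDerivAt_id x).add_const c
  have h2 := hf.hasFDerivAt.comp x h1
  have h3 : HasFDerivAt (fun y => f (y + c)) (fderiv ℝ f (x + c)) x := by
    simpa [Function.comp_def] using h2
  exact h3.fderiv

lemma zperPd {f : (Fin d → ℝ) → ℝ} (hf : ContDiff ℝ 1 f) (hp : ZPer d f) (i : Fin d) :
    ZPer d (pd d i f) := by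
  intro x k
  have hfe : (fun y => f (y + fun j => (k j : ℝ))) = f := funext fun y => hp y k
  have h1 : fderiv ℝ f (x + fun j => (k j : ℝ)) = fderiv ℝ f x := by
    rw [← fderiv_translate (hf.differentiable one_ne_zero _), hfe]
  simp only [pd, h1]

lemma pdMul {f g : (Fin d → ℝ) → ℝ} {x : Fin d → ℝ} (hf : DifferentiableAt ℝ f x)
    (hg : DifferentiableAt ℝ g x) (i : Fin d) :
    pd d i (fun y => f y * g y) x = pd d i f x * g x + f x * pd d i g x := by
  simp only [pd, fderiv_fun_mul hf hg, ContinuousLinearMap.add_apply,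
    ContinuousLinearMap.smul_apply, smul_eq_mul]
  ring

end Aux
lemma integral_pd_sum_eq_zero (d : ℕ) (F : Fin d → ((Fin d → ℝ) → ℝ))
    (hC : ∀ i, ContDiff ℝ 1 (F i)) (hP : ∀ i, ZPer d (F i)) :
    (∫ x in Icc (0 : Fin d → ℝ) 1, ∑ i, pd d i (F i) x) = 0 := by
  cases d with
  | zero => simp
  | succ n =>
    have hle : (0 : Fin (n + 1) → ℝ) ≤ 1 := fun i => zero_le_one
    have hcont : Continuous fun x : Fin (n + 1) → ℝ =>
        ∑ i, fderiv ℝ (F i) x (Pi.single i 1) :=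
      continuous_finset_sum _ fun i _ =>
        ((hC i).continuous_fderiv one_ne_zero).clm_apply continuous_const
    have key := MeasureTheory.integral_divergence_of_hasFDerivAt_off_countable'
      (0 : Fin (n + 1) → ℝ) 1 hle F (fun i x => fderiv ℝ (F i) x) ∅ countable_empty
      (fun i => (hC i).continuous.continuousOn)
      (fun x _ i => ((hC i).differentiable one_ne_zero x).hasFDerivAt)
      (hcont.continuousOn.integrableOn_compact isCompact_Icc)
    have hface : ∀ i : Fin (n + 1), ∀ y : Fin n → ℝ,
        F i (Fin.insertNth i ((1 : Fin (n + 1) → ℝ) i) y)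
          = F i (Fin.insertNth i ((0 : Fin (n + 1) → ℝ) i) y) := by
      intro i y
      have hxk : Fin.insertNth i ((1 : Fin (n + 1) → ℝ) i) y
          = Fin.insertNth i ((0 : Fin (n + 1) → ℝ) i) y
            + fun j => (((fun j => if j = i then (1 : ℤ) else 0) j : ℤ) : ℝ) := by
        funext j
        refine Fin.succAboveCases i ?_ ?_ j
        · simp
        · intro j'
          have hne : i.succAbove j' ≠ i := Fin.succAbove_ne i j'
          simp [hne]
      rw [hxk, hP i]
    simp only [pd] at key ⊢
    rw [key]
    refine Finset.sum_eq_zero fun i _ => ?_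
    rw [sub_eq_zero]
    exact setIntegral_congr_fun measurableSet_Icc fun y _ => hface i y
lemma gstep {α : ℝ} {g : ℝ → ℝ} (hg : Ghyp α g) {C₁ β : ℝ}
    (hA2a : ∀ z : ℝ, 0 < z → C₁ * z ^ β ≤ deriv g z) {s t : ℝ} (hs : 0 < s) (hst : s < t) :
    ∃ c, s < c ∧ c < t ∧ C₁ * c ^ β * (t - s) ≤ g t - g s := by
  have hsub : Icc s t ⊆ Ici (0 : ℝ) := fun y hy => le_trans hs.le hy.1
  obtain ⟨c, hc, hceq⟩ := exists_hasDerivAt_eq_slope g (deriv g) hst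
    (hg.2.1.mono hsub)
    (fun y hy => by
      have hy0 : (0 : ℝ) < y := lt_trans hs hy.1
      exact (hg.2.2.1.differentiableAt (Ioi_mem_nhds hy0)).hasDerivAt)
  refine ⟨c, hc.1, hc.2, ?_⟩
  have hc0 : (0 : ℝ) < c := lt_trans hs hc.1
  have h1 := hA2a c hc0
  have hts : t - s ≠ 0 := by linarith [hst]
  have h2 : deriv g c * (t - s) = g t - g s := by
    rw [hceq]; field_simp
  nlinarith [sub_pos.mpr hst]

set_option maxHeartbeats 1000000 in
lemma ptBound {α : ℝ} {g : ℝ → ℝ} (hg : Ghyp α g) {C₁ β : ℝ} (hC₁ : 0 < C₁)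
    (hA2a : ∀ z : ℝ, 0 < z → C₁ * z ^ β ≤ deriv g z) :
    ∀ t : ℝ, 0 ≤ t → t ^ (β + 2)
      ≤ 2 ^ |β + 2| + (2 ^ (|β| + 2) / C₁) * ((g t - g 1) * (t - 1)) := by
  intro t ht
  have hmono := hg.1.monotoneOn
  have hK1 : (0 : ℝ) < 2 ^ |β + 2| := Real.rpow_pos_of_pos two_pos _
  have hQpos : (0 : ℝ) < 2 ^ (-|β|) := Real.rpow_pos_of_pos two_pos _
  have hQ1 : (2:ℝ) ^ (-|β|) ≤ 1 :=
    Real.rpow_le_one_of_one_le_of_nonpos one_le_two (neg_nonpos.mpr (abs_nonneg _))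
  have hK2 : (0 : ℝ) < 2 ^ (|β| + 2) / C₁ := by positivity
  have hQK2 : (2 : ℝ) ^ (|β| + 2) * 2 ^ (-|β|) = 4 := by
    rw [← Real.rpow_add two_pos, show |β| + 2 + -|β| = ((2:ℕ):ℝ) by push_cast; ring,
      Real.rpow_natCast]
    norm_num
  have hφ : 0 ≤ (g t - g 1) * (t - 1) := by
    rcases le_total 1 t with h | h
    · have := hmono (mem_Ici.mpr zero_le_one) (mem_Ici.mpr (le_trans zero_le_one h)) h
      nlinarith
    · have := hmono (mem_Ici.mpr ht) (mem_Ici.mpr zero_le_one) h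
      nlinarith
  rcases eq_or_lt_of_le ht with h0 | ht0
  · -- t = 0
    rw [← h0] at hφ ⊢
    have h2 : (0:ℝ) ^ (β + 2) ≤ 1 := Real.zero_rpow_le_one _
    have h1 : (1:ℝ) ≤ 2 ^ |β + 2| := by
      rw [show (1:ℝ) = 2 ^ (0:ℝ) by simp]
      exact Real.rpow_le_rpow_of_exponent_le one_le_two (abs_nonneg _)
    nlinarith [mul_nonneg hK2.le hφ]
  have hP : (0:ℝ) < t ^ β := Real.rpow_pos_of_pos ht0 _
  have htb2 : t ^ (β + 2) = t ^ β * t * t := by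
    rw [show β + 2 = β + 1 + 1 by ring, Real.rpow_add_one ht0.ne',
      Real.rpow_add_one ht0.ne']
  rcases le_or_gt 2 t with hbig | hnotbig
  · -- t ≥ 2
    obtain ⟨c, hc1, hc2, hineq⟩ := gstep hg hA2a (show (0:ℝ) < t/2 by linarith)
      (show t/2 < t by linarith)
    have hcb : 2 ^ (-|β|) * t ^ β ≤ c ^ β := by
      rcases le_or_gt 0 β with hb | hb
      · have h1 : (t/2) ^ β ≤ c ^ β := Real.rpow_le_rpow (by linarith) hc1.le hb
        have h2 : (t/2) ^ β = t ^ β * 2 ^ (-β) := by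
          rw [Real.div_rpow ht0.le (by norm_num : (0:ℝ) ≤ 2),
            Real.rpow_neg (by norm_num : (0:ℝ) ≤ 2)]
          ring
        rw [abs_of_nonneg hb]
        nlinarith
      · have h1 : t ^ β ≤ c ^ β :=
          Real.rpow_le_rpow_of_nonpos (by linarith) hc2.le hb.le
        nlinarith
    have hg12 : g 1 ≤ g (t/2) :=
      hmono (mem_Ici.mpr zero_le_one) (mem_Ici.mpr (by linarith)) (by linarith)
    have hA : C₁ * (2 ^ (-|β|) * t ^ β) * (t/2) ≤ g t - g 1 := by
      nlinarith [mul_nonneg (mul_nonneg hC₁.le (show (0:ℝ) ≤ t/2 by linarith))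
        (sub_nonneg.mpr hcb)]
    have hB : C₁ * (2 ^ (-|β|) * t ^ β) * (t/2) * (t/2) ≤ (g t - g 1) * (t - 1) := by
      refine mul_le_mul hA (by linarith) (by linarith) ?_
      nlinarith
    have hC : (2 ^ (|β| + 2) / C₁) * (C₁ * (2 ^ (-|β|) * t ^ β) * (t/2) * (t/2))
        = t ^ β * t * t := by
      have e1 : (2 ^ (|β| + 2) / C₁) * (C₁ * (2 ^ (-|β|) * t ^ β) * (t/2) * (t/2))
          = (2 ^ (|β| + 2) * 2 ^ (-|β|)) * (t ^ β * t * t) / 4 := by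
        field_simp
        ring
      rw [e1, hQK2]
      ring
    have hD := mul_le_mul_of_nonneg_left hB hK2.le
    rw [hC] at hD
    rw [htb2]
    linarith
  rcases le_or_gt t (1/2) with hsmall | hmid
  · -- 0 < t ≤ 1/2
    obtain ⟨c, hc1, hc2, hineq⟩ := gstep hg hA2a ht0 (show t < 2*t by linarith)
    have hg2t : g (2*t) ≤ g 1 :=
      hmono (mem_Ici.mpr (by linarith)) (mem_Ici.mpr zero_le_one) (by linarith)
    have hcb : 2 ^ (-|β|) * t ^ β ≤ c ^ β := by
      rcases le_or_gt 0 β with hb | hb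
      · have h1 : t ^ β ≤ c ^ β := Real.rpow_le_rpow ht0.le hc1.le hb
        nlinarith
      · have h1 : (2*t) ^ β ≤ c ^ β :=
          Real.rpow_le_rpow_of_nonpos (lt_trans ht0 hc1) hc2.le hb.le
        have h2 : (2*t) ^ β = 2 ^ (-|β|) * t ^ β := by
          rw [Real.mul_rpow (by norm_num : (0:ℝ) ≤ 2) ht0.le, abs_of_neg hb, neg_neg]
        linarith
    have hA : C₁ * (2 ^ (-|β|) * t ^ β) * t ≤ g 1 - g t := by
      nlinarith [mul_nonneg (mul_nonneg hC₁.le ht0.le) (sub_nonneg.mpr hcb)]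
    have hB : C₁ * (2 ^ (-|β|) * t ^ β) * t * (1/2) ≤ (g 1 - g t) * (1 - t) := by
      refine mul_le_mul hA (by linarith) (by norm_num) ?_
      nlinarith
    have hC : (2 ^ (|β| + 2) / C₁) * (C₁ * (2 ^ (-|β|) * t ^ β) * t * (1/2))
        = 2 * (t ^ β * t) := by
      have e1 : (2 ^ (|β| + 2) / C₁) * (C₁ * (2 ^ (-|β|) * t ^ β) * t * (1/2))
          = (2 ^ (|β| + 2) * 2 ^ (-|β|)) * (t ^ β * t) / 2 := by
        field_simp
      rw [e1, hQK2]
      ring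
    have hD := mul_le_mul_of_nonneg_left hB hK2.le
    rw [hC] at hD
    have hφe : (g 1 - g t) * (1 - t) = (g t - g 1) * (t - 1) := by ring
    rw [hφe] at hD
    have hE : t ^ β * t * t ≤ 2 * (t ^ β * t) := by
      nlinarith [mul_nonneg (mul_nonneg hP.le ht0.le) (show (0:ℝ) ≤ 2 - t by linarith)]
    rw [htb2]
    linarith
  · -- 1/2 < t < 2
    have hb1 : t ^ (β + 2) ≤ 2 ^ |β + 2| := by
      rcases le_or_gt 0 (β + 2) with hb | hb
      · calc t ^ (β + 2) ≤ 2 ^ (β + 2) := Real.rpow_le_rpow ht0.le (by linarith) hb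
          _ ≤ 2 ^ |β + 2| :=
            Real.rpow_le_rpow_of_exponent_le one_le_two (le_abs_self _)
      · calc t ^ (β + 2) ≤ (1/2 : ℝ) ^ (β + 2) :=
            Real.rpow_le_rpow_of_nonpos (by norm_num) (by linarith) hb.le
          _ = 2 ^ (-(β + 2)) := by
            rw [one_div, Real.inv_rpow (by norm_num : (0:ℝ) ≤ 2),
              ← Real.rpow_neg (by norm_num : (0:ℝ) ≤ 2)]
          _ = 2 ^ |β + 2| := by rw [abs_of_neg hb]
    nlinarith [mul_nonneg hK2.le hφ]
set_option maxHeartbeats 1000000 in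
theorem stmt2 (d : ℕ) (α : ℝ) (hα0 : 0 < α) (hα1 : α < 1)
    (g : ℝ → ℝ) (V : (Fin d → ℝ) → ℝ) (hg : Ghyp α g) (hV : Vhyp d α V)
    (hA1 : A1 d g V)
    (C₁ C₂ β : ℝ) (hC₁ : 0 < C₁) (hC₂ : 0 < C₂)
    (hA2a : ∀ z : ℝ, 0 < z → C₁ * z ^ β ≤ deriv g z)
    (hA2b : ∀ z : ℝ, 0 ≤ z → g z ≤ C₂ + z * g z) :
    ∃ C : ℝ, 0 < C ∧ ∀ ε : ℝ, 0 < ε → ∀ u m : (Fin d → ℝ) → ℝ,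
      DiscSol d α g V ε u m →
        (∫ x in Icc (0 : Fin d → ℝ) 1, m x ^ (β + 2)) ≤ C := by
  obtain ⟨hVper, hVC1⟩ := hV
  have hVcont : Continuous V := hVC1.1.continuous
  have hmemI : (0 : Fin d → ℝ) ∈ Icc (0 : Fin d → ℝ) 1 :=
    mem_Icc.mpr ⟨le_rfl, fun i => zero_le_one⟩
  have hbddA : BddAbove (V '' Icc (0 : Fin d → ℝ) 1) :=
    (isCompact_Icc.image hVcont).bddAbove
  have hbddB : BddBelow (V '' Icc (0 : Fin d → ℝ) 1) :=
    (isCompact_Icc.image hVcont).bddBelow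
  have hVle : ∀ x ∈ Icc (0 : Fin d → ℝ) 1,
      sInf (V '' Icc (0 : Fin d → ℝ) 1) ≤ V x ∧
        V x ≤ sSup (V '' Icc (0 : Fin d → ℝ) 1) := fun x hx =>
    ⟨csInf_le hbddB (mem_image_of_mem V hx), le_csSup hbddA (mem_image_of_mem V hx)⟩
  have hosc : 0 ≤ oscV d V := by
    have h := hVle 0 hmemI
    unfold oscV
    linarith [h.1, h.2]
  have hK1 : (0 : ℝ) < 2 ^ |β + 2| := Real.rpow_pos_of_pos two_pos _
  have hK2 : (0 : ℝ) < 2 ^ (|β| + 2) / C₁ := by positivity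
  refine ⟨2 ^ |β + 2| + (2 ^ (|β| + 2) / C₁) * oscV d V + 1, by positivity, ?_⟩
  intro ε hε u m sol
  have hvol : volume (Icc (0 : Fin d → ℝ) 1) = 1 := by
    rw [Real.volume_Icc_pi]
    simp
  have hvolR : (volume (Icc (0 : Fin d → ℝ) 1)).toReal = 1 := by rw [hvol]; simp
  have hu2 : ContDiff ℝ 2 u := sol.reg_u.1
  have hu1 : ContDiff ℝ 1 u := hu2.of_le (by norm_num)
  have hm1 : ContDiff ℝ 1 m := sol.reg_m.1
  have hpdu : ∀ i, ContDiff ℝ 1 (pd d i u) := fun i => contDiffPd hu2 i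
  have hFc : ∀ i, ContDiff ℝ 1 (fun y => m y * pd d i u y) := fun i => hm1.mul (hpdu i)
  have hFp : ∀ i, ZPer d (fun y => m y * pd d i u y) := by
    intro i x k
    have h1 := sol.per_m x k
    have h2 := zperPd hu1 sol.per_u i x k
    dsimp only
    rw [h1, h2]
  have hgradc : Continuous (gradSq d u) := by
    unfold gradSq
    exact continuous_finset_sum _ fun i _ => (contPd hu1 i).pow 2
  have hdivc : Continuous (divUp d m u) := by
    unfold divUp
    exact continuous_finset_sum _ fun i _ => contPd (hFc i) i
  have hgmc : Continuous fun x => g (m x) :=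
    hg.2.1.comp_continuous hm1.continuous fun x => mem_Ici.mpr (sol.m_nonneg x)
  have intg : ∀ f : (Fin d → ℝ) → ℝ, Continuous f →
      IntegrableOn f (Icc (0 : Fin d → ℝ) 1) := fun f hf =>
    hf.continuousOn.integrableOn_compact isCompact_Icc
  -- ∫ divUp = 0
  have hdiv0 : (∫ x in Icc (0 : Fin d → ℝ) 1, divUp d m u x) = 0 := by
    have h := integral_pd_sum_eq_zero d (fun i y => m y * pd d i u y) hFc hFp
    simpa [divUp] using h
  -- pointwise fp
  have hfp : ∀ x, divUp d m u x = ε * m x - ε := fun x => by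
    have := sol.fp x; linarith
  -- ∫ m = 1
  have hM : (∫ x in Icc (0 : Fin d → ℝ) 1, m x) = 1 := by
    have h1 : (∫ x in Icc (0 : Fin d → ℝ) 1, divUp d m u x)
        = ε * (∫ x in Icc (0 : Fin d → ℝ) 1, m x) - ε := by
      rw [integral_congr_ae (Filter.Eventually.of_forall hfp)]
      rw [integral_sub (intg (fun x => ε * m x) (continuous_const.mul hm1.continuous)) (intg _ continuous_const)]
      rw [integral_const_mul, setIntegral_const, measureReal_def, hvolR]
      simp
    rw [hdiv0] at h1
    have h2 : ε * ((∫ x in Icc (0 : Fin d → ℝ) 1, m x) - 1) = 0 := by ring_nf; linarith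
    rcases mul_eq_zero.mp h2 with h | h
    · exact absurd h hε.ne'
    · linarith
  -- ∫ (u divUp + m gradSq) = 0
  have key2 : (∫ x in Icc (0 : Fin d → ℝ) 1,
      (u x * divUp d m u x + m x * gradSq d u x)) = 0 := by
    have hFc2 : ∀ i, ContDiff ℝ 1 (fun y => u y * (m y * pd d i u y)) :=
      fun i => hu1.mul (hFc i)
    have hFp2 : ∀ i, ZPer d (fun y => u y * (m y * pd d i u y)) := by
      intro i x k
      have h1 := sol.per_u x k
      have h2 := hFp i x k
      dsimp only at h2 ⊢
      rw [h1, h2]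
    have h := integral_pd_sum_eq_zero d (fun i y => u y * (m y * pd d i u y)) hFc2 hFp2
    have hpt : ∀ x, (∑ i, pd d i (fun y => u y * (m y * pd d i u y)) x)
        = u x * divUp d m u x + m x * gradSq d u x := by
      intro x
      have hterm : ∀ i, pd d i (fun y => u y * (m y * pd d i u y)) x
          = pd d i u x * (m x * pd d i u x)
            + u x * pd d i (fun y => m y * pd d i u y) x :=
        fun i => pdMul (hu1.differentiable one_ne_zero x) ((hFc i).differentiable one_ne_zero x) i
      have e1 : (∑ i, pd d i u x * (m x * pd d i u x)) = m x * gradSq d u x := by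
        unfold gradSq
        rw [Finset.mul_sum]
        exact Finset.sum_congr rfl fun i _ => by ring
      have e2 : (∑ i, u x * pd d i (fun y => m y * pd d i u y) x)
          = u x * divUp d m u x := by
        unfold divUp
        rw [Finset.mul_sum]
      calc (∑ i, pd d i (fun y => u y * (m y * pd d i u y)) x)
          = ∑ i, (pd d i u x * (m x * pd d i u x)
              + u x * pd d i (fun y => m y * pd d i u y) x) :=
            Finset.sum_congr rfl fun i _ => hterm i
        _ = (∑ i, pd d i u x * (m x * pd d i u x))
              + ∑ i, u x * pd d i (fun y => m y * pd d i u y) x :=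
            Finset.sum_add_distrib
        _ = u x * divUp d m u x + m x * gradSq d u x := by rw [e1, e2]; ring
    exact (integral_congr_ae (Filter.Eventually.of_forall fun x => (hpt x).symm)).trans h
  have hsplit : (∫ x in Icc (0 : Fin d → ℝ) 1, u x * divUp d m u x)
      + (∫ x in Icc (0 : Fin d → ℝ) 1, m x * gradSq d u x) = 0 := by
    rw [← integral_add (intg (fun x => u x * divUp d m u x) (hu1.continuous.mul hdivc))
      (intg (fun x => m x * gradSq d u x) (hm1.continuous.mul hgradc))]
    exact key2
  have hG1 : 0 ≤ ∫ x in Icc (0 : Fin d → ℝ) 1, m x * gradSq d u x :=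
    setIntegral_nonneg measurableSet_Icc fun x _ =>
      mul_nonneg (sol.m_nonneg x) (by unfold gradSq; positivity)
  have hG0 : 0 ≤ ∫ x in Icc (0 : Fin d → ℝ) 1, gradSq d u x :=
    setIntegral_nonneg measurableSet_Icc fun x _ => by unfold gradSq; positivity
  -- ∫ u divUp = ε B - ε A
  have hudiv : (∫ x in Icc (0 : Fin d → ℝ) 1, u x * divUp d m u x)
      = ε * (∫ x in Icc (0 : Fin d → ℝ) 1, u x * m x)
        - ε * (∫ x in Icc (0 : Fin d → ℝ) 1, u x) := by
    have hptw : ∀ x, u x * divUp d m u x = ε * (u x * m x) - ε * u x := fun x => by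
      rw [hfp x]; ring
    rw [integral_congr_ae (Filter.Eventually.of_forall hptw)]
    rw [integral_sub (intg (fun x => ε * (u x * m x)) (continuous_const.mul (hu1.continuous.mul hm1.continuous)))
      (intg (fun x => ε * u x) (continuous_const.mul hu1.continuous))]
    rw [integral_const_mul, integral_const_mul]
  -- main integral identity from HJ
  have hGM : (∫ x in Icc (0 : Fin d → ℝ) 1, (g (m x) - g 1) * (m x - 1))
      = (ε * (∫ x in Icc (0 : Fin d → ℝ) 1, u x * m x)
          - ε * (∫ x in Icc (0 : Fin d → ℝ) 1, u x))
        + ((1/2) * (∫ x in Icc (0 : Fin d → ℝ) 1, m x * gradSq d u x)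
          - (1/2) * (∫ x in Icc (0 : Fin d → ℝ) 1, gradSq d u x))
        + ((∫ x in Icc (0 : Fin d → ℝ) 1, V x * m x)
          - (∫ x in Icc (0 : Fin d → ℝ) 1, V x))
        + (g 1 - g 1 * (∫ x in Icc (0 : Fin d → ℝ) 1, m x)) := by
    have hptw : ∀ x, (g (m x) - g 1) * (m x - 1)
        = (ε * (u x * m x) - ε * u x)
          + ((1/2) * (m x * gradSq d u x) - (1/2) * gradSq d u x)
          + (V x * m x - V x) + (g 1 - g 1 * m x) := fun x => by
      have h := sol.hj x
      linear_combination (1 - m x) * h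
    rw [integral_congr_ae (Filter.Eventually.of_forall hptw)]
    have i1 : IntegrableOn (fun x => ε * (u x * m x) - ε * u x)
        (Icc (0 : Fin d → ℝ) 1) :=
      ((intg _ (continuous_const.mul (hu1.continuous.mul hm1.continuous))).sub
        (intg _ (continuous_const.mul hu1.continuous)))
    have i2 : IntegrableOn (fun x => (1/2) * (m x * gradSq d u x) - (1/2) * gradSq d u x)
        (Icc (0 : Fin d → ℝ) 1) :=
      ((intg _ (continuous_const.mul (hm1.continuous.mul hgradc))).sub
        (intg _ (continuous_const.mul hgradc)))
    have i3 : IntegrableOn (fun x => V x * m x - V x) (Icc (0 : Fin d → ℝ) 1) :=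
      ((intg _ (hVcont.mul hm1.continuous)).sub (intg _ hVcont))
    have i4 : IntegrableOn (fun x => g 1 - g 1 * m x) (Icc (0 : Fin d → ℝ) 1) :=
      ((intg _ continuous_const).sub (intg _ (continuous_const.mul hm1.continuous)))
    have i12 : IntegrableOn (fun x => (ε * (u x * m x) - ε * u x)
        + ((1/2) * (m x * gradSq d u x) - (1/2) * gradSq d u x))
        (Icc (0 : Fin d → ℝ) 1) := i1.add i2
    have i123 : IntegrableOn (fun x => (ε * (u x * m x) - ε * u x)
        + ((1/2) * (m x * gradSq d u x) - (1/2) * gradSq d u x) + (V x * m x - V x))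
        (Icc (0 : Fin d → ℝ) 1) := i12.add i3
    rw [integral_add i123 i4, integral_add i12 i3, integral_add i1 i2]
    rw [integral_sub (intg (fun x => ε * (u x * m x)) (continuous_const.mul (hu1.continuous.mul hm1.continuous)))
      (intg (fun x => ε * u x) (continuous_const.mul hu1.continuous)),
      integral_sub (intg (fun x => (1/2) * (m x * gradSq d u x)) (continuous_const.mul (hm1.continuous.mul hgradc)))
      (intg (fun x => (1/2) * gradSq d u x) (continuous_const.mul hgradc)),
      integral_sub (intg (fun x => V x * m x) (hVcont.mul hm1.continuous)) (intg _ hVcont),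
      integral_sub (intg _ continuous_const) (intg (fun x => g 1 * m x) (continuous_const.mul hm1.continuous))]
    simp only [integral_const_mul, setIntegral_const, measureReal_def, hvolR, one_smul,
      smul_eq_mul, one_mul]
  -- bound on ∫ V(m-1)
  have hW : (∫ x in Icc (0 : Fin d → ℝ) 1, V x * m x)
      - (∫ x in Icc (0 : Fin d → ℝ) 1, V x) ≤ oscV d V := by
    have h1 : (∫ x in Icc (0 : Fin d → ℝ) 1,
        (V x - sInf (V '' Icc (0 : Fin d → ℝ) 1)) * m x)
        ≤ ∫ x in Icc (0 : Fin d → ℝ) 1, oscV d V * m x := by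
      refine setIntegral_mono_on
        (intg _ ((hVcont.sub continuous_const).mul hm1.continuous))
        (intg _ (continuous_const.mul hm1.continuous)) measurableSet_Icc
        (fun x hx => ?_)
      refine mul_le_mul_of_nonneg_right ?_ (sol.m_nonneg x)
      have := (hVle x hx).2
      unfold oscV
      linarith
    have h2 : 0 ≤ ∫ x in Icc (0 : Fin d → ℝ) 1,
        (V x - sInf (V '' Icc (0 : Fin d → ℝ) 1)) :=
      setIntegral_nonneg measurableSet_Icc fun x hx => by linarith [(hVle x hx).1]
    have h3 : (∫ x in Icc (0 : Fin d → ℝ) 1,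
        (V x - sInf (V '' Icc (0 : Fin d → ℝ) 1)) * m x)
        = (∫ x in Icc (0 : Fin d → ℝ) 1, V x * m x)
          - sInf (V '' Icc (0 : Fin d → ℝ) 1) := by
      have hptw : ∀ x : Fin d → ℝ, (V x - sInf (V '' Icc (0 : Fin d → ℝ) 1)) * m x
          = V x * m x - sInf (V '' Icc (0 : Fin d → ℝ) 1) * m x := fun x => by ring
      rw [integral_congr_ae (Filter.Eventually.of_forall hptw)]
      rw [integral_sub (intg (fun x => V x * m x) (hVcont.mul hm1.continuous))
        (intg (fun x => sInf (V '' Icc (0 : Fin d → ℝ) 1) * m x) (continuous_const.mul hm1.continuous))]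
      rw [integral_const_mul, hM, mul_one]
    have h4 : (∫ x in Icc (0 : Fin d → ℝ) 1,
        (V x - sInf (V '' Icc (0 : Fin d → ℝ) 1)))
        = (∫ x in Icc (0 : Fin d → ℝ) 1, V x)
          - sInf (V '' Icc (0 : Fin d → ℝ) 1) := by
      rw [integral_sub (intg _ hVcont) (intg _ continuous_const)]
      rw [setIntegral_const, measureReal_def, hvolR, one_smul]
    have h5 : (∫ x in Icc (0 : Fin d → ℝ) 1, oscV d V * m x) = oscV d V := by
      rw [integral_const_mul, hM, mul_one]
    rw [h3] at h1
    rw [h4] at h2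
    rw [h5] at h1
    linarith
  -- combine: ∫ (g(m)-g1)(m-1) ≤ oscV
  have hεrel : ε * (∫ x in Icc (0 : Fin d → ℝ) 1, u x * m x)
      - ε * (∫ x in Icc (0 : Fin d → ℝ) 1, u x)
      = - ∫ x in Icc (0 : Fin d → ℝ) 1, m x * gradSq d u x := by
    rw [← hudiv]; linarith
  have hGMle : (∫ x in Icc (0 : Fin d → ℝ) 1, (g (m x) - g 1) * (m x - 1)) ≤ oscV d V := by
    rw [hGM, hεrel, hM]
    linarith
  -- final bound
  by_cases hint : IntegrableOn (fun x => m x ^ (β + 2)) (Icc (0 : Fin d → ℝ) 1)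
  · have hmono : (∫ x in Icc (0 : Fin d → ℝ) 1, m x ^ (β + 2))
        ≤ ∫ x in Icc (0 : Fin d → ℝ) 1,
          (2 ^ |β + 2| + (2 ^ (|β| + 2) / C₁) * ((g (m x) - g 1) * (m x - 1))) := by
      refine setIntegral_mono_on hint ?_ measurableSet_Icc
        (fun x _ => ptBound hg hC₁ hA2a (m x) (sol.m_nonneg x))
      exact intg _ (continuous_const.add (continuous_const.mul
        (((hgmc.sub continuous_const)).mul (hm1.continuous.sub continuous_const))))
    have heq : (∫ x in Icc (0 : Fin d → ℝ) 1,
        (2 ^ |β + 2| + (2 ^ (|β| + 2) / C₁) * ((g (m x) - g 1) * (m x - 1))))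
        = 2 ^ |β + 2| + (2 ^ (|β| + 2) / C₁)
          * (∫ x in Icc (0 : Fin d → ℝ) 1, (g (m x) - g 1) * (m x - 1)) := by
      rw [integral_add (intg _ continuous_const)
        (intg (fun x => (2 ^ (|β| + 2) / C₁) * ((g (m x) - g 1) * (m x - 1))) (continuous_const.mul
          ((hgmc.sub continuous_const).mul (hm1.continuous.sub continuous_const))))]
      rw [integral_const_mul, setIntegral_const, measureReal_def, hvolR, one_smul]
    rw [heq] at hmono
    have : (2 ^ (|β| + 2) / C₁)
        * (∫ x in Icc (0 : Fin d → ℝ) 1, (g (m x) - g 1) * (m x - 1))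
        ≤ (2 ^ (|β| + 2) / C₁) * oscV d V :=
      mul_le_mul_of_nonneg_left hGMle hK2.le
    linarith
  · rw [MeasureTheory.integral_undef hint]
    positivity
end

section
/- Let ε > 0 and let (u, m) be a classical solution of the discounted MFG system. Then ∫_{T^d} ( (1/2)|Du|² − V(x) + g(m) ) m dx = ε ∫_{T^d} u dx. -/
open MeasureTheory Set

lemma pd_contDiff_one {d : ℕ} {f : (Fin d → ℝ) → ℝ} (hf : ContDiff ℝ 2 f) (i : Fin d) :
    ContDiff ℝ 1 (pd d i f) :=
  (hf.fderiv_right (by norm_num)).clm_apply contDiff_const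

lemma pd_continuous {d : ℕ} {f : (Fin d → ℝ) → ℝ} (hf : ContDiff ℝ 1 f) (i : Fin d) :
    Continuous (pd d i f) :=
  ((hf.fderiv_right (m := 0) (by norm_num)).clm_apply contDiff_const).continuous

lemma pd_mul {d : ℕ} {A B : (Fin d → ℝ) → ℝ} {x : Fin d → ℝ} (i : Fin d)
    (hA : DifferentiableAt ℝ A x) (hB : DifferentiableAt ℝ B x) :
    pd d i (fun y => A y * B y) x = pd d i A x * B x + A x * pd d i B x := by
  unfold pd
  rw [fderiv_fun_mul hA hB]
  simp [add_comm, mul_comm]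

lemma div_integral_zero (d : ℕ) (F : Fin d → (Fin d → ℝ) → ℝ)
    (hreg : ∀ i, ContDiff ℝ 1 (F i)) (hper : ∀ i, ZPer d (F i)) :
    ∫ x in Icc (0 : Fin d → ℝ) 1, ∑ i, pd d i (F i) x = 0 := by
  cases d with
  | zero => simp
  | succ n =>
    have hcont : Continuous fun x => ∑ i, pd (n+1) i (F i) x :=
      continuous_finset_sum _ fun i _ => pd_continuous (hreg i) i
    have key := MeasureTheory.integral_divergence_of_hasFDerivAt_off_countable'
      (0 : Fin (n+1) → ℝ) 1 (fun i => zero_le_one) F (fun i x => fderiv ℝ (F i) x)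
      ∅ Set.countable_empty
      (fun i => (hreg i).continuous.continuousOn)
      (fun x _ i => (((hreg i).differentiable one_ne_zero) x).hasFDerivAt)
      (hcont.integrableOn_Icc)
    rw [show (fun x => ∑ i, pd (n+1) i (F i) x) = fun x => ∑ i, fderiv ℝ (F i) x (Pi.single i 1)
        from rfl] at *
    rw [key]
    refine Finset.sum_eq_zero fun i _ => sub_eq_zero.2 ?_
    refine setIntegral_congr_fun measurableSet_Icc fun x _ => ?_
    have hx : Fin.insertNth i ((1 : Fin (n+1) → ℝ) i) x
        = Fin.insertNth i ((0 : Fin (n+1) → ℝ) i) x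
          + fun j => ((Pi.single i 1 : Fin (n+1) → ℤ) j : ℝ) := by
      funext j
      rcases eq_or_ne j i with rfl | hj
      · simp
      · obtain ⟨k, rfl⟩ := Fin.exists_succAbove_eq hj
        simp [Fin.insertNth_apply_succAbove, Pi.single_apply, (Fin.succAbove_ne i k)]
    rw [hx, hper i _ (Pi.single i 1)]

theorem stmt12 (d : ℕ) (α : ℝ) (hα0 : 0 < α) (hα1 : α < 1)
    (g : ℝ → ℝ) (V : (Fin d → ℝ) → ℝ) (hg : Ghyp α g) (hV : Vhyp d α V)
    (ε : ℝ) (hε : 0 < ε) (u m : (Fin d → ℝ) → ℝ)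
    (hsol : DiscSol d α g V ε u m) :
    (∫ x in Icc (0 : Fin d → ℝ) 1,
        ((1 / 2) * gradSq d u x - V x + g (m x)) * m x)
      = ε * ∫ x in Icc (0 : Fin d → ℝ) 1, u x := by
  have hu2 : ContDiff ℝ 2 u := hsol.reg_u.1
  have hm1 : ContDiff ℝ 1 m := hsol.reg_m.1
  have hpdu : ∀ i, ContDiff ℝ 1 (pd d i u) := fun i => pd_contDiff_one hu2 i
  have hG : ∀ i, ContDiff ℝ 1 (fun y => m y * pd d i u y) := fun i => hm1.mul (hpdu i)
  have hF : ∀ i, ContDiff ℝ 1 (fun y => u y * (m y * pd d i u y)) :=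
    fun i => (hu2.of_le one_le_two).mul (hG i)
  -- periodicity of the vector field
  have hperF : ∀ i, ZPer d (fun y => u y * (m y * pd d i u y)) := by
    intro i x k
    have hpd : pd d i u (x + fun j => (k j : ℝ)) = pd d i u x := by
      unfold pd
      have hcomp : u = u ∘ (fun y : Fin d → ℝ => y + fun j => (k j : ℝ)) := by
        funext y; exact (hsol.per_u y k).symm
      conv_rhs => rw [hcomp]
      rw [fderiv_comp x (hu2.differentiable two_ne_zero _)
        (differentiableAt_fun_id.add_const _)]
      simp [fderiv_add_const]
    simp only [hsol.per_u x k, hsol.per_m x k, hpd]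
  -- pointwise divergence identity
  have hdiv : ∀ x, (∑ i, pd d i (fun y => u y * (m y * pd d i u y)) x)
      = m x * gradSq d u x + u x * divUp d m u x := by
    intro x
    unfold gradSq divUp
    rw [Finset.mul_sum, Finset.mul_sum, ← Finset.sum_add_distrib]
    refine Finset.sum_congr rfl fun i _ => ?_
    rw [pd_mul i ((hu2.differentiable two_ne_zero) x) (((hG i).differentiable one_ne_zero) x)]
    ring
  have h0 : ∫ x in Icc (0 : Fin d → ℝ) 1,
      (m x * gradSq d u x + u x * divUp d m u x) = 0 := by
    rw [show (fun x => m x * gradSq d u x + u x * divUp d m u x)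
        = fun x => ∑ i, pd d i (fun y => u y * (m y * pd d i u y)) x from
      funext fun x => (hdiv x).symm]
    exact div_integral_zero d _ hF hperF
  -- continuity facts
  have hc_gs : Continuous (gradSq d u) := by
    unfold gradSq
    exact continuous_finset_sum _ fun i _ => ((hpdu i).continuous).pow 2
  have hc_du : Continuous (divUp d m u) := by
    unfold divUp
    exact continuous_finset_sum _ fun i _ => pd_continuous (hG i) i
  have hcm : Continuous m := hm1.continuous
  have hcu : Continuous u := hu2.continuous
  have hcA : Continuous fun x => m x * gradSq d u x + u x * divUp d m u x :=
    (hcm.mul hc_gs).add (hcu.mul hc_du)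
  -- pointwise identity for the integrand
  have hpoint : ∀ x, ((1 / 2) * gradSq d u x - V x + g (m x)) * m x
      = (m x * gradSq d u x + u x * divUp d m u x) + ε * u x := by
    intro x
    have h1 := hsol.hj x
    have h2 := hsol.fp x
    have hdu : divUp d m u x = ε * m x - ε := by linarith
    rw [← h1, hdu]; ring
  calc (∫ x in Icc (0 : Fin d → ℝ) 1, ((1 / 2) * gradSq d u x - V x + g (m x)) * m x)
      = ∫ x in Icc (0 : Fin d → ℝ) 1,
          ((m x * gradSq d u x + u x * divUp d m u x) + ε * u x) := by
        simp only [hpoint]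
    _ = (∫ x in Icc (0 : Fin d → ℝ) 1, (m x * gradSq d u x + u x * divUp d m u x))
          + ∫ x in Icc (0 : Fin d → ℝ) 1, ε * u x := by
        exact integral_add hcA.integrableOn_Icc ((continuous_const.mul hcu).integrableOn_Icc)
    _ = ε * ∫ x in Icc (0 : Fin d → ℝ) 1, u x := by
        rw [h0, MeasureTheory.integral_const_mul, zero_add]
end

section
/- Consider the one-dimensional problem with g(m) = m and V(x) = π cos(2πx). Let u : ℝ → ℝ be Lipschitz and 1-periodic, let m ∈ L¹([0,1]) with m ≥ 0 a.e. and ∫₀¹ m dx = 1, and let H̄ ∈ ℝ be such that: (i) m(x) u'(x) = 0 for a.e. x; (ii) (1/2)(u'(x))² + π cos(2πx) ≤ m(x) + H̄ for a.e. x; and (iii) ((1/2)(u'(x))² + π cos(2πx) − m(x) − H̄) m(x) = 0 for a.e. x. Then H̄ = 0 and m(x) = (π cos(2πx))⁺ for a.e. x ∈ [0,1]. -/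
open MeasureTheory Set

noncomputable def Vfn (x : ℝ) : ℝ := Real.pi * Real.cos (2 * Real.pi * x)

lemma Vfn_cont : Continuous Vfn := by
  unfold Vfn; fun_prop

lemma intVfn (a b : ℝ) :
    ∫ x in a..b, Vfn x = (Real.sin (2 * Real.pi * b) - Real.sin (2 * Real.pi * a)) / 2 := by
  unfold Vfn
  have h2 : (2 * Real.pi) ≠ 0 := by positivity
  rw [intervalIntegral.integral_const_mul,
    intervalIntegral.integral_comp_mul_left (fun x => Real.cos x) h2, integral_cos,
    smul_eq_mul]
  field_simp

lemma Vfn_pos {x : ℝ} (hx : x ∈ Ioo (0:ℝ) (1/4)) : 0 < Vfn x := by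
  have hπ := Real.pi_pos
  have : 0 < Real.cos (2 * Real.pi * x) := by
    apply Real.cos_pos_of_mem_Ioo
    constructor
    · nlinarith [hx.1, hx.2]
    · nlinarith [hx.1, hx.2]
  exact mul_pos hπ this

lemma int_g0 : ∫ x in Icc (0:ℝ) 1, max (Vfn x) 0 = 1 := by
  have hπ := Real.pi_pos
  have hc : Continuous (fun x => max (Vfn x) 0) := Vfn_cont.max continuous_const
  have hi : ∀ a b : ℝ, IntervalIntegrable (fun x => max (Vfn x) 0) volume a b :=
    fun a b => hc.intervalIntegrable a b
  rw [MeasureTheory.integral_Icc_eq_integral_Ioc,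
    ← intervalIntegral.integral_of_le (by norm_num : (0:ℝ) ≤ 1)]
  rw [← intervalIntegral.integral_add_adjacent_intervals (a := (0:ℝ)) (b := 1/4) (c := 1)
    (hi _ _) (hi _ _),
    ← intervalIntegral.integral_add_adjacent_intervals (a := (1/4:ℝ)) (b := 3/4) (c := 1)
    (hi _ _) (hi _ _)]
  have e1 : ∫ x in (0:ℝ)..(1/4), max (Vfn x) 0 = ∫ x in (0:ℝ)..(1/4), Vfn x := by
    apply intervalIntegral.integral_congr
    intro x hx
    rw [uIcc_of_le (by norm_num)] at hx
    have h0 : 0 ≤ Real.cos (2 * Real.pi * x) := by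
      apply Real.cos_nonneg_of_mem_Icc
      constructor
      · nlinarith [hx.1, hx.2]
      · nlinarith [hx.1, hx.2]
    exact max_eq_left (mul_nonneg hπ.le h0)
  have e2 : ∫ x in (1/4:ℝ)..(3/4), max (Vfn x) 0 = 0 := by
    have e2' : ∫ x in (1/4:ℝ)..(3/4), max (Vfn x) 0 = ∫ x in (1/4:ℝ)..(3/4), (0:ℝ) := by
      apply intervalIntegral.integral_congr
      intro x hx
      rw [uIcc_of_le (by norm_num)] at hx
      have h0 : Real.cos (2 * Real.pi * x) ≤ 0 := by
        apply Real.cos_nonpos_of_pi_div_two_le_of_le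
        · nlinarith [hx.1, hx.2]
        · nlinarith [hx.1, hx.2]
      exact max_eq_right (mul_nonpos_of_nonneg_of_nonpos hπ.le h0)
    rw [e2']; simp
  have e3 : ∫ x in (3/4:ℝ)..1, max (Vfn x) 0 = ∫ x in (3/4:ℝ)..1, Vfn x := by
    apply intervalIntegral.integral_congr
    intro x hx
    rw [uIcc_of_le (by norm_num)] at hx
    have h0 : 0 ≤ Real.cos (2 * Real.pi * x) := by
      rw [← Real.cos_sub_two_pi]
      apply Real.cos_nonneg_of_mem_Icc
      constructor
      · nlinarith [hx.1, hx.2]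
      · nlinarith [hx.1, hx.2]
    exact max_eq_left (mul_nonneg hπ.le h0)
  rw [e1, e2, e3, intVfn, intVfn]
  have s1 : (2:ℝ) * Real.pi * (1/4) = Real.pi / 2 := by ring
  have s2 : (2:ℝ) * Real.pi * (3/4) = Real.pi / 2 + Real.pi := by ring
  have s3 : (2:ℝ) * Real.pi * 1 = 2 * Real.pi := by ring
  have s4 : (2:ℝ) * Real.pi * 0 = 0 := by ring
  rw [s1, s2, s3, s4, Real.sin_pi_div_two, Real.sin_zero, Real.sin_two_pi,
    Real.sin_add_pi, Real.sin_pi_div_two]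
  norm_num

lemma contra_int (f : ℝ → ℝ) (hfc : Continuous f) (hnn : ∀ x, 0 ≤ f x)
    (hint : ∫ x in Icc (0:ℝ) 1, f x = 0)
    (hpos : ∀ x ∈ Ioo (0:ℝ) (1/4 : ℝ), f x ≠ 0) : False := by
  have hInt : Integrable f (volume.restrict (Icc (0:ℝ) 1)) := hfc.integrableOn_Icc
  have hae : 0 ≤ᶠ[ae (volume.restrict (Icc (0:ℝ) 1))] f :=
    Filter.Eventually.of_forall hnn
  have hz := (MeasureTheory.integral_eq_zero_iff_of_nonneg_ae hae hInt).mp hint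
  have hz' : ∀ᵐ x ∂(volume : Measure ℝ), x ∈ Icc (0:ℝ) 1 → f x = 0 :=
    (ae_restrict_iff' measurableSet_Icc).mp hz
  rw [MeasureTheory.ae_iff] at hz'
  have hsub : Ioo (0:ℝ) (1/4) ⊆ {x | ¬ (x ∈ Icc (0:ℝ) 1 → f x = 0)} := by
    intro x hx
    simp only [mem_setOf_eq, Classical.not_imp]
    exact ⟨⟨hx.1.le, by linarith [hx.2]⟩, hpos x hx⟩
  have := measure_mono (μ := (volume : Measure ℝ)) hsub
  rw [hz'] at this
  simp only [le_zero_iff] at this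
  rw [Real.volume_Ioo] at this
  norm_num at this

theorem stmt19 (u : ℝ → ℝ) (hLip : ∃ K : NNReal, LipschitzWith K u)
    (hper : Function.Periodic u 1)
    (m : ℝ → ℝ) (hmInt : IntegrableOn m (Icc (0 : ℝ) 1))
    (hm0 : ∀ᵐ x ∂(volume : Measure ℝ), x ∈ Icc (0 : ℝ) 1 → 0 ≤ m x)
    (hmass : (∫ x in Icc (0 : ℝ) 1, m x) = 1)
    (H : ℝ)
    (h1 : ∀ᵐ x ∂(volume : Measure ℝ), x ∈ Icc (0 : ℝ) 1 →
      m x * deriv u x = 0)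
    (h2 : ∀ᵐ x ∂(volume : Measure ℝ), x ∈ Icc (0 : ℝ) 1 →
      (1 / 2) * deriv u x ^ 2 + Real.pi * Real.cos (2 * Real.pi * x) ≤ m x + H)
    (h3 : ∀ᵐ x ∂(volume : Measure ℝ), x ∈ Icc (0 : ℝ) 1 →
      ((1 / 2) * deriv u x ^ 2 + Real.pi * Real.cos (2 * Real.pi * x) - m x - H) * m x = 0) :
    H = 0 ∧ ∀ᵐ x ∂(volume : Measure ℝ), x ∈ Icc (0 : ℝ) 1 →
      m x = max (Real.pi * Real.cos (2 * Real.pi * x)) 0 := by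
  -- Step A: a.e. on Icc, m x = max (Vfn x - H) 0
  have hae : ∀ᵐ x ∂(volume : Measure ℝ), x ∈ Icc (0:ℝ) 1 →
      m x = max (Vfn x - H) 0 := by
    filter_upwards [hm0, h1, h2, h3] with x hm0x h1x h2x h3x hx
    have hm0x := hm0x hx; have h1x := h1x hx; have h2x := h2x hx; have h3x := h3x hx
    set d := deriv u x
    by_cases hm : m x = 0
    · rw [hm]
      symm
      apply max_eq_right
      have hd : 0 ≤ d ^ 2 := sq_nonneg d
      unfold Vfn
      nlinarith [h2x]
    · have hd : d = 0 := by
        rcases mul_eq_zero.mp h1x with h | h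
        · exact absurd h hm
        · exact h
      have hVm : Vfn x - H = m x := by
        unfold Vfn
        rcases mul_eq_zero.mp h3x with h | h
        · rw [hd] at h; nlinarith [h]
        · exact absurd h hm
      rw [hVm]
      symm
      exact max_eq_left (lt_of_le_of_ne hm0x (Ne.symm hm)).le
  -- Step B: the integral of max (Vfn x - H) 0 over Icc is 1
  have hIH : ∫ x in Icc (0:ℝ) 1, max (Vfn x - H) 0 = 1 := by
    rw [← MeasureTheory.setIntegral_congr_ae measurableSet_Icc hae]
    exact hmass
  have hI0 : ∫ x in Icc (0:ℝ) 1, max (Vfn x) 0 = 1 := int_g0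
  -- Step C: H = 0
  have hgc : ∀ c : ℝ, Continuous (fun x => max (Vfn x - c) 0) :=
    fun c => (Vfn_cont.sub continuous_const).max continuous_const
  have hH0 : H = 0 := by
    rcases lt_trichotomy H 0 with hH | hH | hH
    · exfalso
      apply contra_int (fun x => max (Vfn x - H) 0 - max (Vfn x) 0)
      · exact (hgc H).sub ((hgc 0).comp continuous_id |>.congr (by
          intro x; simp))
      · intro x
        simp only [sub_nonneg]
        exact max_le_max (by linarith) le_rfl
      · rw [MeasureTheory.integral_sub ((hgc H).integrableOn_Icc)
          ((Vfn_cont.max continuous_const).integrableOn_Icc), hIH, hI0]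
        ring
      · intro x hx
        have hV := Vfn_pos hx
        have e1 : max (Vfn x - H) 0 = Vfn x - H := max_eq_left (by linarith)
        have e2 : max (Vfn x) 0 = Vfn x := max_eq_left hV.le
        rw [e1, e2]
        intro h
        have : H = 0 := by linarith
        exact absurd this (ne_of_lt hH)
    · exact hH
    · exfalso
      apply contra_int (fun x => max (Vfn x) 0 - max (Vfn x - H) 0)
      · exact (Vfn_cont.max continuous_const).sub (hgc H)
      · intro x
        simp only [sub_nonneg]
        exact max_le_max (by linarith) le_rfl
      · rw [MeasureTheory.integral_sub
          ((Vfn_cont.max continuous_const).integrableOn_Icc)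
          ((hgc H).integrableOn_Icc), hIH, hI0]
        ring
      · intro x hx
        have hV := Vfn_pos hx
        have e2 : max (Vfn x) 0 = Vfn x := max_eq_left hV.le
        rw [e2]
        have : max (Vfn x - H) 0 < Vfn x := by
          rcases le_or_gt (Vfn x - H) 0 with h | h
          · rw [max_eq_right h]; exact hV
          · rw [max_eq_left h.le]; linarith
        intro h
        linarith [this]
  refine ⟨hH0, ?_⟩
  filter_upwards [hae] with x hx hx'
  have := hx hx'
  rw [hH0] at this
  simpa [Vfn] using this
end
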